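/- If D_n(3) \cap L contains a point that is not a degree sequence of a 3-uniform hypergraph on [n] (with the point lying in a face fixing one coordinate to 0 when extended), then D_{n+1}(3) \cap L also contains a point that is not a degree sequence: specifically, D_n(3) embedded as the vectors with last coordinate 0 is the face of D_{n+1}(3) maximizing the weight w = (0,...,0,-1), and the embedded point remains a non-degree-sequence lattice point of D_{n+1}(3). -/

import Mathlib

open scoped Classical

/-- The indicator vector of a subset `S` of `[n]`. -/
noncomputable def eS (n : ℕ) (S : Finset (Fin n)) : Fin n → ℝ :=
  fun i => if i ∈ S then 1 else 0

/-- The zonotope `D_n(k)`, generated by the `e_S` over all `k`-subsets `S` of `[n]`. -/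
noncomputable def D (n k : ℕ) : Set (Fin n → ℝ) :=
  {x | ∃ c : Finset (Fin n) → ℝ, (∀ S, 0 ≤ c S ∧ c S ≤ 1) ∧
    x = ∑ S ∈ Finset.univ.powersetCard k, c S • eS n S}

/-- The dot product of two vectors. -/
noncomputable def dot (n : ℕ) (w x : Fin n → ℝ) : ℝ := ∑ i, w i * x i

/-- `x` is the degree sequence of a `3`-uniform hypergraph on `[n]`. -/
def IsDegSeq (n : ℕ) (x : Fin n → ℝ) : Prop :=
  ∃ K : Finset (Finset (Fin n)), (∀ S ∈ K, S.card = 3) ∧ x = ∑ S ∈ K, eS n S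

namespace ExtendAux

variable {n : ℕ}

@[simp] lemma cse_eq (i : Fin n) : (Fin.castSuccEmb i : Fin (n+1)) = i.castSucc := rfl

@[simp] lemma castLE_eq (h : n ≤ n + 1) (i : Fin n) :
    (Fin.castLE h i : Fin (n+1)) = i.castSucc := rfl

@[simp] lemma cse_ne_last (i : Fin n) : (Fin.castSuccEmb i : Fin (n+1)) ≠ Fin.last n :=
  (Fin.castSucc_lt_last i).ne

@[simp] lemma castSucc_ne_last (i : Fin n) : (i.castSucc : Fin (n+1)) ≠ Fin.last n :=
  (Fin.castSucc_lt_last i).ne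

noncomputable def pre (S : Finset (Fin (n+1))) : Finset (Fin n) :=
  S.preimage Fin.castSucc ((Fin.castSucc_injective n).injOn)

lemma mem_pre {S : Finset (Fin (n+1))} {i : Fin n} : i ∈ pre S ↔ i.castSucc ∈ S :=
  Finset.mem_preimage

lemma map_pre {S : Finset (Fin (n+1))} (h : Fin.last n ∉ S) :
    (pre S).map Fin.castSuccEmb = S := by
  ext j
  simp only [Finset.mem_map, mem_pre, cse_eq]
  constructor
  · rintro ⟨a, ha, rfl⟩; exact ha
  · intro hj
    rcases Fin.exists_castSucc_eq.mpr (fun hje => h (hje ▸ hj)) with ⟨a, rfl⟩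
    exact ⟨a, hj, rfl⟩

lemma pre_map (T : Finset (Fin n)) : pre (T.map Fin.castSuccEmb) = T := by
  ext i; simp [mem_pre, Finset.mem_map, cse_eq, Fin.castSucc_inj]

lemma card_pre {S : Finset (Fin (n+1))} (h : Fin.last n ∉ S) : (pre S).card = S.card := by
  conv_rhs => rw [← map_pre h]
  simp

lemma filter_eq :
    (Finset.univ.powersetCard 3 : Finset (Finset (Fin (n+1)))).filter (fun S => Fin.last n ∉ S)
      = (Finset.univ.powersetCard 3 : Finset (Finset (Fin n))).image
          (fun T => T.map Fin.castSuccEmb) := by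
  ext S
  simp only [Finset.mem_filter, Finset.mem_powersetCard_univ, Finset.mem_image]
  constructor
  · rintro ⟨hc, hl⟩
    exact ⟨pre S, by rw [card_pre hl, hc], map_pre hl⟩
  · rintro ⟨T, hT, rfl⟩
    constructor
    · simpa using hT
    · simp [Finset.mem_map, cse_ne_last]

lemma eS_map (T : Finset (Fin n)) :
    eS (n+1) (T.map Fin.castSuccEmb) = Fin.snoc (eS n T) 0 := by
  funext j
  induction j using Fin.lastCases with
  | last => simp [eS, Finset.mem_map, cse_ne_last]
  | cast i => simp [eS, Fin.snoc_castSucc, Finset.mem_map, cse_eq, Fin.castSucc_inj]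

lemma last_nonneg {y : Fin (n+1) → ℝ} (hy : y ∈ D (n+1) 3) : 0 ≤ y (Fin.last n) := by
  obtain ⟨c, hc, rfl⟩ := hy
  simp only [Finset.sum_apply, Pi.smul_apply, smul_eq_mul]
  apply Finset.sum_nonneg
  intro S _
  have := (hc S).1
  unfold eS
  positivity

lemma dot_w (y : Fin (n+1) → ℝ) :
    dot (n+1) (Fin.snoc 0 (-1)) y = - y (Fin.last n) := by
  unfold dot
  rw [Fin.sum_univ_castSucc]
  simp

lemma mem_D_snoc {x : Fin n → ℝ} (hx : x ∈ D n 3) : (Fin.snoc x 0 : Fin (n+1) → ℝ) ∈ D (n+1) 3 := by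
  obtain ⟨c, hc, rfl⟩ := hx
  refine ⟨fun S => if Fin.last n ∈ S then 0 else c (pre S), fun S => ?_, ?_⟩
  · dsimp only
    split
    · exact ⟨le_refl 0, zero_le_one⟩
    · exact hc _
  · rw [← Finset.sum_filter_add_sum_filter_not (Finset.univ.powersetCard 3)
      (fun S => Fin.last n ∉ S)]
    have h1 : ∀ S ∈ (Finset.univ.powersetCard 3 : Finset (Finset (Fin (n+1)))).filter
        (fun S => ¬ Fin.last n ∉ S),
        (if Fin.last n ∈ S then 0 else c (pre S)) • eS (n+1) S = 0 := by
      intro S hS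
      simp only [Finset.mem_filter, not_not] at hS
      simp [hS.2]
    rw [Finset.sum_congr rfl h1, Finset.sum_const_zero, add_zero, filter_eq,
      Finset.sum_image (fun T _ T' _ h => by rw [← pre_map T, ← pre_map T', h])]
    have h2 : ∀ T ∈ (Finset.univ.powersetCard 3 : Finset (Finset (Fin n))),
        (if Fin.last n ∈ T.map Fin.castSuccEmb then 0 else c (pre (T.map Fin.castSuccEmb)))
          • eS (n+1) (T.map Fin.castSuccEmb) = c T • (Fin.snoc (eS n T) 0 : Fin (n+1) → ℝ) := by
      intro T _
      rw [pre_map, eS_map, if_neg (by simp [Finset.mem_map, cse_ne_last])]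
    rw [Finset.sum_congr rfl h2]
    funext j
    induction j using Fin.lastCases with
    | last => simp
    | cast i => simp [Fin.snoc_castSucc]

lemma mem_D_of_last_zero {y : Fin (n+1) → ℝ} (hy : y ∈ D (n+1) 3) (h0 : y (Fin.last n) = 0) :
    ∃ x ∈ D n 3, y = Fin.snoc x 0 := by
  obtain ⟨c, hc, rfl⟩ := hy
  -- coefficients on sets containing last vanish
  have hzero : ∀ S ∈ (Finset.univ.powersetCard 3 : Finset (Finset (Fin (n+1)))),
      Fin.last n ∈ S → c S = 0 := by
    intro S hS hl
    have hsum0 : ∑ S ∈ Finset.univ.powersetCard 3, c S * (if Fin.last n ∈ S then (1:ℝ) else 0) = 0 := by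
      simpa [eS] using h0
    have hterm := (Finset.sum_eq_zero_iff_of_nonneg (fun S _ => by
      have := (hc S).1; positivity)).mp hsum0 S hS
    simpa [hl] using hterm
  refine ⟨fun i => (∑ S ∈ Finset.univ.powersetCard 3, c S • eS (n+1) S) i.castSucc,
    ⟨fun T => c (T.map Fin.castSuccEmb), fun T => hc _, ?_⟩, ?_⟩
  · funext i
    simp only [Finset.sum_apply, Pi.smul_apply, smul_eq_mul]
    rw [← Finset.sum_filter_add_sum_filter_not (Finset.univ.powersetCard 3)
      (fun S => Fin.last n ∉ S)]
    have h1 : ∀ S ∈ (Finset.univ.powersetCard 3 : Finset (Finset (Fin (n+1)))).filter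
        (fun S => ¬ Fin.last n ∉ S), c S * eS (n+1) S i.castSucc = 0 := by
      intro S hS
      simp only [Finset.mem_filter, not_not] at hS
      rw [hzero S hS.1 hS.2, zero_mul]
    rw [Finset.sum_congr rfl h1, Finset.sum_const_zero, add_zero, filter_eq,
      Finset.sum_image (fun T _ T' _ h => by rw [← pre_map T, ← pre_map T', h])]
    apply Finset.sum_congr rfl
    intro T _
    rw [eS_map]
    simp [eS, Fin.snoc_castSucc]
  · funext j
    induction j using Fin.lastCases with
    | last => simpa using h0
    | cast i => simp [Fin.snoc_castSucc]

lemma degseq_of_snoc {x : Fin n → ℝ} (h : IsDegSeq (n+1) (Fin.snoc x 0)) : IsDegSeq n x := by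
  obtain ⟨K, hK, hx⟩ := h
  have hlast : ∀ S ∈ K, Fin.last n ∉ S := by
    intro S hS hl
    have h0 : (0:ℝ) = ∑ S ∈ K, (if Fin.last n ∈ S then (1:ℝ) else 0) := by
      have := congrFun hx (Fin.last n)
      simpa [eS] using this
    have hterm : ∀ S ∈ K, (if Fin.last n ∈ S then (1:ℝ) else 0) = 0 := by
      apply (Finset.sum_eq_zero_iff_of_nonneg (fun S _ => by positivity)).mp h0.symm
    have := hterm S hS
    simp [hl] at this
  refine ⟨K.image pre, ?_, ?_⟩
  · intro T hT
    obtain ⟨S, hS, rfl⟩ := Finset.mem_image.mp hT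
    rw [card_pre (hlast S hS)]
    exact hK S hS
  · rw [Finset.sum_image (fun S hS S' hS' h => by
      rw [← map_pre (hlast S hS), ← map_pre (hlast S' hS'), h])]
    funext i
    have := congrFun hx i.castSucc
    simp only [Fin.snoc_castSucc] at this
    rw [this]
    simp only [Finset.sum_apply]
    apply Finset.sum_congr rfl
    intro S _
    simp [eS, mem_pre]

end ExtendAux

open ExtendAux

/-- If `p` is a lattice point of `D_n(3)` that is not a degree sequence, then its extension
by a zero coordinate is a lattice point of `D_{n+1}(3)` that is not a degree sequence;
moreover the copy of `D_n(3)` with last coordinate `0` is exactly the face of `D_{n+1}(3)`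
maximizing the weight `w = (0,…,0,-1)`. -/

theorem extend_non_degree_sequence (n : ℕ) (p : Fin n → ℝ)
    (hD : p ∈ D n 3) (hint : ∀ i, ∃ z : ℤ, p i = z) (hsum : ∃ z : ℤ, ∑ i, p i = 3 * z)
    (hnd : ¬ IsDegSeq n p) :
    ({x | x ∈ D (n + 1) 3 ∧ ∀ y ∈ D (n + 1) 3,
        dot (n + 1) (Fin.snoc 0 (-1)) y ≤ dot (n + 1) (Fin.snoc 0 (-1)) x} =
      (fun x : Fin n → ℝ => Fin.snoc x 0) '' D n 3) ∧
    (Fin.snoc p 0 : Fin (n + 1) → ℝ) ∈ D (n + 1) 3 ∧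
    (∀ i, ∃ z : ℤ, (Fin.snoc p 0 : Fin (n + 1) → ℝ) i = z) ∧
    (∃ z : ℤ, ∑ i, (Fin.snoc p 0 : Fin (n + 1) → ℝ) i = 3 * z) ∧
    ¬ IsDegSeq (n + 1) (Fin.snoc p 0) := by
  have hpD : (Fin.snoc p 0 : Fin (n + 1) → ℝ) ∈ D (n + 1) 3 := mem_D_snoc hD
  refine ⟨?_, hpD, ?_, ?_, ?_⟩
  · ext x
    simp only [Set.mem_setOf_eq, Set.mem_image]
    constructor
    · rintro ⟨hx, hmax⟩
      have h1 := hmax _ hpD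
      rw [dot_w, dot_w] at h1
      have h2 : x (Fin.last n) = 0 := by
        have := last_nonneg hx
        have hp0 : (Fin.snoc p 0 : Fin (n + 1) → ℝ) (Fin.last n) = 0 := Fin.snoc_last _ _
        rw [hp0] at h1
        linarith
      obtain ⟨y, hy, rfl⟩ := mem_D_of_last_zero hx h2
      exact ⟨y, hy, rfl⟩
    · rintro ⟨y, hy, rfl⟩
      refine ⟨mem_D_snoc hy, fun z hz => ?_⟩
      rw [dot_w, dot_w]
      have h1 := last_nonneg hz
      have hp0 : (Fin.snoc y 0 : Fin (n + 1) → ℝ) (Fin.last n) = 0 := Fin.snoc_last _ _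
      rw [hp0]
      linarith
  · intro i
    induction i using Fin.lastCases with
    | last => exact ⟨0, by simp⟩
    | cast i => exact ⟨(hint i).choose, by simpa [Fin.snoc_castSucc] using (hint i).choose_spec⟩
  · obtain ⟨z, hz⟩ := hsum
    refine ⟨z, ?_⟩
    rw [Fin.sum_univ_castSucc]
    simp [Fin.snoc_castSucc, hz]
  · intro h
    exact hnd (degseq_of_snoc h)
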